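/- Under Slater's condition (ρ > 0), restricting the Lagrange multipliers to the ℓ₁-ball of radius L/ρ does not change the dual value: inf over λ ∈ ℝ^m with λ ≥ 0 of max over q ∈ Q of ( r·q − Σ_{i=1}^m λ_i (G_i·q − α_i) ) equals min over λ ∈ ℝ^m with λ ≥ 0 and ‖λ‖₁ ≤ L/ρ of max over q ∈ Q of ( r·q − Σ_{i=1}^m λ_i (G_i·q − α_i) ). Moreover, for every λ ≥ 0 with ‖λ‖₁ > L/ρ one has max_{q∈Q} ( r·q − Σ_i λ_i (G_i·q − α_i) ) > L, while the restricted minimum is at most L. -/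
import Mathlib


/-!
Statement 5. Under Slater's condition `ρ > 0`, restricting the Lagrange multipliers to
the `ℓ₁`-ball of radius `L/ρ` does not change the dual value:
`inf_{λ ≥ 0} max_{q ∈ Q} (r·q − Σ_i λ_i (G_i·q − α_i))
  = min_{λ ≥ 0, ‖λ‖₁ ≤ L/ρ} max_{q ∈ Q} (r·q − Σ_i λ_i (G_i·q − α_i))`.
Moreover, every `λ ≥ 0` with `‖λ‖₁ > L/ρ` has dual objective `> L`, while the
restricted minimum is at most `L`.
-/

open Finset

theorem multipliers_ball_restriction
    (n m : ℕ) (hn : 1 ≤ n) (hm : 1 ≤ m) (L : ℝ) (hL : 0 < L)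
    (Q : Set (Fin n → ℝ)) (hQne : Q.Nonempty) (hQcpt : IsCompact Q)
    (hQcvx : Convex ℝ Q) (hQbox : ∀ q ∈ Q, ∀ j, q j ∈ Set.Icc (0 : ℝ) 1)
    (hQsum : ∀ q ∈ Q, ∑ j, q j = L)
    (r : Fin n → ℝ) (hr : ∀ j, r j ∈ Set.Icc (0 : ℝ) 1)
    (G : Fin m → Fin n → ℝ) (hG : ∀ i j, G i j ∈ Set.Icc (0 : ℝ) 1)
    (α : Fin m → ℝ) (hα : ∀ i, α i ∈ Set.Icc (0 : ℝ) L)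
    (ρ : ℝ) (hρ : ρ = sSup ((fun q => ⨅ i : Fin m, (α i - ∑ j, G i j * q j)) '' Q))
    (hSlater : 0 < ρ) :
    sInf ((fun lam => sSup ((fun q => (∑ j, r j * q j) -
            ∑ i, lam i * ((∑ j, G i j * q j) - α i)) '' Q)) ''
          {lam : Fin m → ℝ | ∀ i, 0 ≤ lam i})
      = sInf ((fun lam => sSup ((fun q => (∑ j, r j * q j) -
            ∑ i, lam i * ((∑ j, G i j * q j) - α i)) '' Q)) ''
          {lam : Fin m → ℝ | (∀ i, 0 ≤ lam i) ∧ ∑ i, |lam i| ≤ L / ρ})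
    ∧ (∀ lam : Fin m → ℝ, (∀ i, 0 ≤ lam i) → L / ρ < ∑ i, |lam i| →
        L < sSup ((fun q => (∑ j, r j * q j) -
            ∑ i, lam i * ((∑ j, G i j * q j) - α i)) '' Q))
    ∧ sInf ((fun lam => sSup ((fun q => (∑ j, r j * q j) -
            ∑ i, lam i * ((∑ j, G i j * q j) - α i)) '' Q)) ''
          {lam : Fin m → ℝ | (∀ i, 0 ≤ lam i) ∧ ∑ i, |lam i| ≤ L / ρ}) ≤ L := by
  haveI : Nonempty (Fin m) := ⟨⟨0, hm⟩⟩
  set f : (Fin m → ℝ) → (Fin n → ℝ) → ℝ :=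
    fun lam q => (∑ j, r j * q j) - ∑ i, lam i * ((∑ j, G i j * q j) - α i) with hf
  set F : (Fin m → ℝ) → ℝ := fun lam => sSup (f lam '' Q) with hF
  -- continuity of f lam in q
  have hcont : ∀ lam, Continuous (f lam) := by
    intro lam
    apply Continuous.sub
    · exact continuous_finset_sum _ fun j _ => continuous_const.mul (continuous_apply j)
    · exact continuous_finset_sum _ fun i _ =>
        continuous_const.mul (((continuous_finset_sum _ fun j _ =>
          continuous_const.mul (continuous_apply j))).sub continuous_const)
  have himgne : ∀ lam, ((f lam) '' Q).Nonempty := fun lam => hQne.image _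
  have hbdd : ∀ lam, BddAbove ((f lam) '' Q) :=
    fun lam => (hQcpt.image (hcont lam)).bddAbove
  -- the Slater point q*
  have hgcont : Continuous (fun q : Fin n → ℝ => ⨅ i : Fin m, (α i - ∑ j, G i j * q j)) := by
    have heq : (fun q : Fin n → ℝ => ⨅ i : Fin m, (α i - ∑ j, G i j * q j))
        = fun q => Finset.univ.inf' Finset.univ_nonempty
            (fun i => (fun q : Fin n → ℝ => α i - ∑ j, G i j * q j) q) := by
      funext q; rw [Finset.inf'_univ_eq_ciInf]
    rw [heq]
    exact Continuous.finset_inf'_apply _ fun i _ =>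
      continuous_const.sub (continuous_finset_sum _ fun j _ => continuous_const.mul (continuous_apply j))
  have hρmem : ρ ∈ (fun q : Fin n → ℝ => ⨅ i : Fin m, (α i - ∑ j, G i j * q j)) '' Q := by
    rw [hρ]
    exact (hQcpt.image hgcont).sSup_mem (hQne.image _)
  obtain ⟨qs, hqsQ, hqs⟩ := hρmem
  have hqs' : ∀ i, ρ ≤ α i - ∑ j, G i j * qs j := by
    intro i
    calc ρ = ⨅ i : Fin m, (α i - ∑ j, G i j * qs j) := hqs.symm
    _ ≤ α i - ∑ j, G i j * qs j := ciInf_le (Set.Finite.bddBelow (Set.finite_range _)) i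
  -- basic bounds on r·q
  have hrq0 : ∀ q ∈ Q, 0 ≤ ∑ j, r j * q j := by
    intro q hq
    exact Finset.sum_nonneg fun j _ => mul_nonneg (hr j).1 (hQbox q hq j).1
  have hrqL : ∀ q ∈ Q, (∑ j, r j * q j) ≤ L := by
    intro q hq
    calc (∑ j, r j * q j) ≤ ∑ j, q j :=
          Finset.sum_le_sum fun j _ => mul_le_of_le_one_left (hQbox q hq j).1 (hr j).2
    _ = L := hQsum q hq
  -- lower bound: F lam ≥ ρ * Σ lam for lam ≥ 0
  have hkey : ∀ lam : Fin m → ℝ, (∀ i, 0 ≤ lam i) → ρ * ∑ i, lam i ≤ f lam qs := by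
    intro lam hlam
    have h1 : ∑ i, lam i * ((∑ j, G i j * qs j) - α i) ≤ ∑ i, lam i * (-ρ) := by
      refine Finset.sum_le_sum fun i _ => mul_le_mul_of_nonneg_left ?_ (hlam i)
      linarith [hqs' i]
    have h2 : ∑ i, lam i * (-ρ) = -(ρ * ∑ i, lam i) := by
      rw [Finset.mul_sum]; simp [mul_comm]
    have h3 := hrq0 qs hqsQ
    simp only [hf]
    rw [h2] at h1
    linarith
  have hFlow : ∀ lam : Fin m → ℝ, (∀ i, 0 ≤ lam i) → ρ * ∑ i, lam i ≤ F lam := by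
    intro lam hlam
    exact le_trans (hkey lam hlam) (le_csSup (hbdd lam) ⟨qs, hqsQ, rfl⟩)
  have hF0 : ∀ lam : Fin m → ℝ, (∀ i, 0 ≤ lam i) → (0 : ℝ) ≤ F lam := by
    intro lam hlam
    exact le_trans (mul_nonneg hSlater.le (Finset.sum_nonneg fun i _ => hlam i)) (hFlow lam hlam)
  -- part (b)
  have partb : ∀ lam : Fin m → ℝ, (∀ i, 0 ≤ lam i) → L / ρ < ∑ i, |lam i| → L < F lam := by
    intro lam hlam hball
    have habs : ∑ i, |lam i| = ∑ i, lam i :=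
      Finset.sum_congr rfl fun i _ => abs_of_nonneg (hlam i)
    have : L < ρ * ∑ i, lam i := by
      rw [habs] at hball
      calc L = ρ * (L / ρ) := by field_simp
      _ < ρ * ∑ i, lam i := by exact mul_lt_mul_of_pos_left hball hSlater
    exact lt_of_lt_of_le this (hFlow lam hlam)
  -- F 0 ≤ L
  have hF0L : F (fun _ => 0) ≤ L := by
    apply csSup_le (himgne _)
    rintro x ⟨q, hq, rfl⟩
    simp only [hf, zero_mul, Finset.sum_const_zero, sub_zero]
    exact hrqL q hq
  have h0mem : (fun _ => (0 : ℝ)) ∈ {lam : Fin m → ℝ | (∀ i, 0 ≤ lam i) ∧ ∑ i, |lam i| ≤ L / ρ} := by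
    constructor
    · intro i; exact le_refl 0
    · have h : (0:ℝ) ≤ L / ρ := by positivity
      simpa using h
  -- restricted image properties
  have hresne : (F '' {lam : Fin m → ℝ | (∀ i, 0 ≤ lam i) ∧ ∑ i, |lam i| ≤ L / ρ}).Nonempty :=
    ⟨_, _, h0mem, rfl⟩
  have hresbdd : BddBelow (F '' {lam : Fin m → ℝ | (∀ i, 0 ≤ lam i) ∧ ∑ i, |lam i| ≤ L / ρ}) := by
    refine ⟨0, ?_⟩; rintro x ⟨lam, hlam, rfl⟩; exact hF0 lam hlam.1
  have hfullbdd : BddBelow (F '' {lam : Fin m → ℝ | ∀ i, 0 ≤ lam i}) := by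
    refine ⟨0, ?_⟩; rintro x ⟨lam, hlam, rfl⟩; exact hF0 lam hlam
  -- part (c)
  have partc : sInf (F '' {lam : Fin m → ℝ | (∀ i, 0 ≤ lam i) ∧ ∑ i, |lam i| ≤ L / ρ}) ≤ L :=
    le_trans (csInf_le hresbdd ⟨_, h0mem, rfl⟩) hF0L
  -- part (a)
  have parta : sInf (F '' {lam : Fin m → ℝ | ∀ i, 0 ≤ lam i})
      = sInf (F '' {lam : Fin m → ℝ | (∀ i, 0 ≤ lam i) ∧ ∑ i, |lam i| ≤ L / ρ}) := by
    apply le_antisymm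
    · apply csInf_le_csInf hfullbdd hresne
      rintro x ⟨lam, hlam, rfl⟩
      exact ⟨lam, hlam.1, rfl⟩
    · have h0full : (fun _ => (0:ℝ)) ∈ {lam : Fin m → ℝ | ∀ i, 0 ≤ lam i} := h0mem.1
      apply le_csInf ⟨F (fun _ => 0), Set.mem_image_of_mem F h0full⟩
      rintro x ⟨lam, hlam, rfl⟩
      by_cases hb : ∑ i, |lam i| ≤ L / ρ
      · exact csInf_le hresbdd ⟨lam, ⟨hlam, hb⟩, rfl⟩
      · exact le_trans partc (partb lam hlam (lt_of_not_ge hb)).le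
  exact ⟨parta, partb, partc⟩
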